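/- Let f, g: [m,M] → ℝ be continuous and positive, with at least one of them strictly increasing, and suppose g(y) ≥ f(y) for all y ∈ [m,M]. Let y₀, y: [0,1] → [m,M] be C² solutions of y₀″ = f(y₀) and y″ = g(y) with y₀(0) ≥ y(0) and y₀(1) ≥ y(1). Then y₀(x) ≥ y(x) for all x ∈ [0,1]. -/

import Mathlib

theorem comparison_principle_envelopes (m M : ℝ) (hmM : m ≤ M)
    (f g : ℝ → ℝ)
    (hfc : ContinuousOn f (Set.Icc m M)) (hgc : ContinuousOn g (Set.Icc m M))
    (hfpos : ∀ y ∈ Set.Icc m M, 0 < f y) (hgpos : ∀ y ∈ Set.Icc m M, 0 < g y)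
    (hmono : StrictMonoOn f (Set.Icc m M) ∨ StrictMonoOn g (Set.Icc m M))
    (hfg : ∀ y ∈ Set.Icc m M, f y ≤ g y)
    (y₀ y : ℝ → ℝ)
    (hy₀smooth : ContDiff ℝ 2 y₀) (hysmooth : ContDiff ℝ 2 y)
    (hy₀mem : ∀ x ∈ Set.Icc (0:ℝ) 1, y₀ x ∈ Set.Icc m M)
    (hymem : ∀ x ∈ Set.Icc (0:ℝ) 1, y x ∈ Set.Icc m M)
    (hy₀ode : ∀ x ∈ Set.Icc (0:ℝ) 1, deriv (deriv y₀) x = f (y₀ x))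
    (hyode : ∀ x ∈ Set.Icc (0:ℝ) 1, deriv (deriv y) x = g (y x))
    (hb0 : y 0 ≤ y₀ 0) (hb1 : y 1 ≤ y₀ 1) :
    ∀ x ∈ Set.Icc (0:ℝ) 1, y x ≤ y₀ x := by
  set w : ℝ → ℝ := fun x => y x - y₀ x with hw
  have hwsmooth : ContDiff ℝ 2 w := hysmooth.sub hy₀smooth
  have htwo : (2 : WithTop ℕ∞) = 1 + 1 := by norm_num
  have hydiff : Differentiable ℝ y := hysmooth.differentiable (by norm_num)
  have hy₀diff : Differentiable ℝ y₀ := hy₀smooth.differentiable (by norm_num)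
  have hy1 : ContDiff ℝ 1 (deriv y) := by
    have := (contDiff_succ_iff_deriv.1 (htwo ▸ hysmooth)).2.2
    exact this
  have hy₀1 : ContDiff ℝ 1 (deriv y₀) := by
    have := (contDiff_succ_iff_deriv.1 (htwo ▸ hy₀smooth)).2.2
    exact this
  have hwderiv : deriv w = fun x => deriv y x - deriv y₀ x := by
    funext x
    exact deriv_sub (hydiff x) (hy₀diff x)
  have hwderiv2 : ∀ x, deriv (deriv w) x = deriv (deriv y) x - deriv (deriv y₀) x := by
    intro x
    rw [hwderiv]
    exact deriv_fun_sub (hy1.differentiable (by norm_num) x) (hy₀1.differentiable (by norm_num) x)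
  have hw2cont : Continuous (deriv (deriv w)) := by
    have h1 : ContDiff ℝ 1 (deriv w) := (contDiff_succ_iff_deriv.1 (htwo ▸ hwsmooth)).2.2
    exact (contDiff_one_iff_deriv.1 h1).2
  have hwcont : Continuous w := hwsmooth.continuous
  obtain ⟨c, hc01, hcmax⟩ := (isCompact_Icc (a := (0:ℝ)) (b := 1)).exists_isMaxOn
    ⟨0, Set.left_mem_Icc.2 zero_le_one⟩ hwcont.continuousOn
  by_contra hcon
  push_neg at hcon
  obtain ⟨x₁, hx₁, hx₁lt⟩ := hcon
  have hwc_pos : 0 < w c := lt_of_lt_of_le (by simpa [hw] using sub_pos.2 hx₁lt) (hcmax hx₁)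
  have hc0 : 0 < c := by
    rcases lt_or_eq_of_le hc01.1 with h | h
    · exact h
    · exfalso; rw [← h] at hwc_pos; simp only [hw] at hwc_pos; linarith
  have hc1 : c < 1 := by
    rcases lt_or_eq_of_le hc01.2 with h | h
    · exact h
    · exfalso; rw [h] at hwc_pos; simp only [hw] at hwc_pos; linarith
  -- local max, so derivative zero
  have hloc : IsLocalMax w c :=
    hcmax.isLocalMax (Icc_mem_nhds hc0 hc1)
  have hderiv0 : deriv w c = 0 := hloc.deriv_eq_zero
  -- second derivative positive at c
  have hyc : y c ∈ Set.Icc m M := hymem c hc01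
  have hy₀c : y₀ c ∈ Set.Icc m M := hy₀mem c hc01
  have hlt : y₀ c < y c := by
    have := hwc_pos; simp only [hw] at this; linarith
  have hw2pos : 0 < deriv (deriv w) c := by
    rw [hwderiv2, hyode c hc01, hy₀ode c hc01]
    rcases hmono with hf | hg
    · have h1 : f (y₀ c) < f (y c) := hf hy₀c hyc hlt
      have h2 : f (y c) ≤ g (y c) := hfg _ hyc
      linarith
    · have h1 : g (y₀ c) < g (y c) := hg hy₀c hyc hlt
      have h2 : f (y₀ c) ≤ g (y₀ c) := hfg _ hy₀c
      linarith
  -- get a neighborhood where second derivative is positive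
  have hev : ∀ᶠ x in nhds c, 0 < deriv (deriv w) x :=
    (hw2cont.tendsto c).eventually (eventually_gt_nhds hw2pos)
  obtain ⟨ε, hε, hball⟩ := Metric.eventually_nhds_iff_ball.1 hev
  set δ : ℝ := min (ε / 2) ((1 - c) / 2) with hδ
  have hδpos : 0 < δ := lt_min (by linarith) (by linarith)
  have hsub : Set.Icc c (c + δ) ⊆ Metric.ball c ε := by
    intro x hx
    rw [Metric.mem_ball, Real.dist_eq, abs_lt]
    constructor
    · linarith [hx.1]
    · have : δ ≤ ε / 2 := min_le_left _ _
      have := hx.2; linarith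
  -- deriv w is strictly monotone on Icc c (c+δ)
  have hmonoW : StrictMonoOn (deriv w) (Set.Icc c (c + δ)) := by
    apply strictMonoOn_of_deriv_pos (convex_Icc _ _)
      ((contDiff_succ_iff_deriv.1 (htwo ▸ hwsmooth)).2.2.continuous.continuousOn)
    intro x hx
    rw [interior_Icc] at hx
    exact hball _ (hsub (Set.mem_Icc.2 ⟨le_of_lt hx.1, le_of_lt hx.2⟩))
  have hderivpos : ∀ x ∈ Set.Ioo c (c + δ), 0 < deriv w x := by
    intro x hx
    have := hmonoW (Set.left_mem_Icc.2 (by linarith)) ⟨le_of_lt hx.1, hx.2.le⟩ hx.1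
    rw [hderiv0] at this
    exact this
  have hmonoW2 : StrictMonoOn w (Set.Icc c (c + δ)) := by
    apply strictMonoOn_of_deriv_pos (convex_Icc _ _) hwcont.continuousOn
    intro x hx
    rw [interior_Icc] at hx
    exact hderivpos x hx
  have hcd : c + δ ≤ 1 := by
    have : δ ≤ (1 - c) / 2 := min_le_right _ _
    linarith
  have : w c < w (c + δ) :=
    hmonoW2 (Set.left_mem_Icc.2 (by linarith)) (Set.right_mem_Icc.2 (by linarith))
      (by linarith)
  have : w (c + δ) ≤ w c := hcmax (Set.mem_Icc.2 ⟨by linarith [hc01.1], hcd⟩)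
  linarith
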